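/- Let s, r, t be positive integers and set T = Σ_{k=0}^{s} C(r, k) (sum of binomial coefficients). Let F = (V, E) be a finite r-uniform hypergraph, i.e. E is a family of r-element subsets of the finite set V. Then there exist a subfamily E* ⊆ E with |E*| ≥ (t·r·2^{2r+1})^{−T−1}·|E| and a colouring c : V → {1, …, r} such that: (i) c(F) = {1, …, r} for every F ∈ E* (each edge of E* is rainbow); and (ii) there is a family H of subsets of {1, …, r}, each of size at most s, such that for every set e ⊆ {1, …, r} with |e| ≤ s: if e ∈ H then for every F ∈ E* there exist t pairwise distinct edges F₁, …, F_t ∈ E* with c(F ∩ F_i) ⊇ e for each i; and if e ∉ H then for all distinct F, F' ∈ E*, c(F ∩ F') does not contain e. -/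

import Mathlib

open SimpleGraph

/-- The average degree of a graph: `2 e(G) / |V(G)|`. -/
noncomputable def avgDeg {V : Type*} (G : SimpleGraph V) : ℝ :=
  2 * (G.edgeSet.ncard : ℝ) / (Nat.card V : ℝ)

/-- The maximum degree of a graph on a finite vertex type. -/
noncomputable def maxDeg {V : Type*} [Fintype V] (G : SimpleGraph V) : ℕ :=
  Finset.univ.sup fun v => (G.neighborSet v).ncard

/-- `G` contains no (not necessarily induced) copy of the complete bipartite graph `K_{s,s}`. -/
def KssFree {V : Type*} (G : SimpleGraph V) (s : ℕ) : Prop :=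
  ¬ ∃ S T : Finset V, Disjoint S T ∧ S.card = s ∧ T.card = s ∧
      ∀ a ∈ S, ∀ b ∈ T, G.Adj a b

/-- `G` contains no (not necessarily induced) copy of the four-cycle `C₄`:
no two distinct vertices have two distinct common neighbours. -/
def C4Free {V : Type*} (G : SimpleGraph V) : Prop :=
  ¬ ∃ a b c d : V, a ≠ b ∧ c ≠ d ∧ G.Adj a c ∧ G.Adj b c ∧ G.Adj a d ∧ G.Adj b d

/-- `G` contains no triangle. -/
def C3Free {V : Type*} (G : SimpleGraph V) : Prop :=
  ¬ ∃ a b c : V, G.Adj a b ∧ G.Adj b c ∧ G.Adj a c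

/-- `G` is bipartite: the vertex set can be split into two independent sets. -/
def IsBipartite {V : Type*} (G : SimpleGraph V) : Prop :=
  ∃ f : V → Bool, ∀ ⦃a b : V⦄, G.Adj a b → f a ≠ f b

/-- `G` is `d`-degenerate: every nonempty (induced) subgraph has a vertex of degree at most `d`. -/
def IsDegenerate {V : Type*} (G : SimpleGraph V) (d : ℝ) : Prop :=
  ∀ S : Finset V, S.Nonempty → ∃ v ∈ S, ((G.neighborSet v ∩ ↑S).ncard : ℝ) ≤ d

/-- The number of edges of `G` with one endpoint in `A` and one in `B`. -/
noncomputable def eBetween {V : Type*} (G : SimpleGraph V) (A B : Set V) : ℕ :=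
  {e : Sym2 V | e ∈ G.edgeSet ∧ ∃ a ∈ A, ∃ b ∈ B, e = s(a, b)}.ncard

section FKaux
open Finset
open scoped Classical

set_option linter.unusedSectionVars false
set_option linter.unusedVariables false

variable {V : Type} [Fintype V] [DecidableEq V] {r : ℕ}


lemma succ_pow_le_four_mul (r : ℕ) (hr : 1 ≤ r) : (r+1)^r ≤ 4 * r^r := by
  have hrpos : (0:ℝ) < r := by exact_mod_cast hr
  have h1 : (1 + 1/(r:ℝ)) ≤ Real.exp (1/r) := by
    have := Real.add_one_le_exp (1/(r:ℝ)); linarith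
  have h2 : (1 + 1/(r:ℝ))^r ≤ Real.exp 1 := by
    calc (1 + 1/(r:ℝ))^r ≤ (Real.exp (1/r))^r := by
          apply pow_le_pow_left₀ (by positivity) h1
      _ = Real.exp ((r:ℝ) * (1/r)) := by rw [← Real.exp_nat_mul]
      _ = Real.exp 1 := by rw [mul_one_div, div_self (ne_of_gt hrpos)]
  have h3 : Real.exp 1 ≤ 4 := le_of_lt (lt_trans Real.exp_one_lt_d9 (by norm_num))
  have key : ((r:ℝ)+1)^r ≤ 4 * (r:ℝ)^r := by
    have : ((r:ℝ)+1) = r * (1 + 1/r) := by field_simp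
    rw [this, mul_pow]
    calc (r:ℝ)^r * (1+1/(r:ℝ))^r ≤ (r:ℝ)^r * 4 := by
          apply mul_le_mul_of_nonneg_left (le_trans h2 h3) (by positivity)
      _ = 4 * (r:ℝ)^r := by ring
  exact_mod_cast (by push_cast; exact key : ((r:ℕ)+1:ℝ)^r ≤ 4 * (r:ℝ)^r)

lemma pow_self_le_factorial_mul (r : ℕ) : r^r ≤ r.factorial * 4^r := by
  induction r with
  | zero => simp
  | succ n ih =>
    rcases Nat.eq_zero_or_pos n with h | h
    · subst h; simp [Nat.factorial]
    · calc (n+1)^(n+1) = (n+1) * (n+1)^n := by ring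
        _ ≤ (n+1) * (4 * n^n) := Nat.mul_le_mul_left _ (succ_pow_le_four_mul n h)
        _ ≤ (n+1) * (4 * (n.factorial * 4^n)) := by
            exact Nat.mul_le_mul_left _ (Nat.mul_le_mul_left _ ih)
        _ = (n+1).factorial * 4^(n+1) := by rw [Nat.factorial_succ]; ring



lemma fk_sum_choose_le (r s : ℕ) : ∑ k ∈ Finset.range (s+1), r.choose k ≤ 2^r := by
  have h1 : ∑ k ∈ Finset.range (s+1), r.choose k ≤ ∑ k ∈ Finset.range (s+r+1), r.choose k :=
    Finset.sum_le_sum_of_subset (Finset.range_subset_range.mpr (by omega))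
  have h2 : ∑ k ∈ Finset.range (r+1), r.choose k = ∑ k ∈ Finset.range (s+r+1), r.choose k := by
    apply Finset.sum_subset (Finset.range_subset_range.mpr (by omega))
    intro k _ hk
    rw [Finset.mem_range, not_lt] at hk
    exact Nat.choose_eq_zero_of_lt (by omega)
  rw [← h2] at h1
  rw [Nat.sum_range_choose] at h1
  exact h1

lemma fk_one_le_sum_choose (r s : ℕ) : 1 ≤ ∑ k ∈ Finset.range (s+1), r.choose k := by
  have h0 : (0:ℕ) ∈ Finset.range (s+1) := Finset.mem_range.mpr (by omega)
  calc 1 = r.choose 0 := (Nat.choose_zero_right r).symm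
    _ ≤ _ := Finset.single_le_sum (fun k _ => Nat.zero_le _) h0

lemma fk_arith (r t T : ℕ) (hr : 1 ≤ r) (ht : 1 ≤ t) (hT1 : 1 ≤ T) (hT2 : T ≤ 2^r) :
    4^r * (2*t*T)^(T+1) ≤ (t*r*2^(2*r+1))^(T+1) := by
  have h1 : 2*t*T ≤ t * 2^(r+1) := by
    calc 2*t*T ≤ 2*t*2^r := Nat.mul_le_mul_left _ hT2
      _ = t * 2^(r+1) := by rw [pow_succ]; ring
  have h2 : t*r*2^(2*r+1) = (t*2^(r+1)) * (r*2^r) := by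
    have : 2^(2*r+1) = 2^(r+1) * 2^r := by rw [← pow_add]; congr 1; omega
    rw [this]; ring
  have h3 : 4^r ≤ (r*2^r)^(T+1) := by
    have ha : (4:ℕ)^r = (2^r)^2 := by
      rw [← pow_mul]
      have : (4:ℕ) = 2^2 := by norm_num
      rw [this, ← pow_mul]
      congr 1
      omega
    have hb : (2^r)^2 ≤ (2^r)^(T+1) := Nat.pow_le_pow_right (Nat.pow_pos (by omega)) (by omega)
    have hc : (2^r)^(T+1) ≤ (r*2^r)^(T+1) :=
      Nat.pow_le_pow_left (by calc 2^r = 1*2^r := (one_mul _).symm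
        _ ≤ r*2^r := Nat.mul_le_mul_right _ hr) _
    omega
  calc 4^r * (2*t*T)^(T+1) ≤ (r*2^r)^(T+1) * (t*2^(r+1))^(T+1) :=
        Nat.mul_le_mul h3 (Nat.pow_le_pow_left h1 _)
    _ = ((t*2^(r+1)) * (r*2^r))^(T+1) := by rw [← mul_pow]; ring_nf
    _ = (t*r*2^(2*r+1))^(T+1) := by rw [← h2]




lemma rainbow_count (r : ℕ) (F : Finset V) (hF : F.card = r) :
    r.factorial * r ^ (Fintype.card V - r) ≤
      (Finset.univ.filter fun c : V → Fin r => F.image c = Finset.univ).card := by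
  classical
  set P : (V → Fin r) → Prop := fun c => F.image c = Finset.univ with hP
  have hcardF : Fintype.card ↥F = r := by simp [hF]
  have hcardC : Fintype.card {x : V // x ∉ F} = Fintype.card V - r := by
    rw [Fintype.card_subtype_compl]
    simp [hF]
  -- the gluing map
  let g : ((↥F ≃ Fin r) × ({x : V // x ∉ F} → Fin r)) → (V → Fin r) :=
    fun p v => if h : v ∈ F then p.1 ⟨v, h⟩ else p.2 ⟨v, h⟩
  have hgP : ∀ p, P (g p) := by
    intro p
    show F.image (g p) = Finset.univ
    rw [Finset.eq_univ_iff_forall]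
    intro j
    rw [Finset.mem_image]
    refine ⟨(p.1.symm j : ↥F), (p.1.symm j).2, ?_⟩
    simp [g, (p.1.symm j).2]
  have hginj : Function.Injective g := by
    intro p q hpq
    have h1 : p.1 = q.1 := by
      ext x
      have := congrFun hpq x.1
      simpa [g, x.2] using congrArg Fin.val (by simpa [g, x.2] using this)
    have h2 : p.2 = q.2 := by
      funext y
      have := congrFun hpq y.1
      simpa [g, y.2] using this
    exact Prod.ext h1 h2
  have hinj2 : Function.Injective (fun p => (⟨g p, hgP p⟩ : {c : V → Fin r // P c})) := by
    intro p q h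
    exact hginj (congrArg Subtype.val h)
  have hle := Fintype.card_le_of_injective _ hinj2
  have hdom : Fintype.card ((↥F ≃ Fin r) × ({x : V // x ∉ F} → Fin r)) =
      r.factorial * r ^ (Fintype.card V - r) := by
    rw [Fintype.card_prod, Fintype.card_fun, hcardC, Fintype.card_fin]
    congr 1
    rw [Fintype.card_equiv (Fintype.equivOfCardEq (by simp [hcardF]))]
    rw [hcardF]
  have hsub : Fintype.card {c : V → Fin r // P c} =
      (Finset.univ.filter fun c : V → Fin r => F.image c = Finset.univ).card := by
    rw [Fintype.card_subtype]
  omega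


lemma exists_good_colouring (r : ℕ) (hr : 0 < r) (E : Finset (Finset V))
    (hunif : ∀ F ∈ E, F.card = r) (hne : E.Nonempty) :
    ∃ c : V → Fin r, E.card ≤ 4^r * (E.filter fun F => F.image c = Finset.univ).card := by
  classical
  set n := Fintype.card V with hn
  have hnr : r ≤ n := by
    obtain ⟨F₀, hF₀⟩ := hne
    calc r = F₀.card := (hunif F₀ hF₀).symm
      _ ≤ n := by rw [hn, ← Finset.card_univ]; exact Finset.card_le_card (Finset.subset_univ _)
  have hsum : E.card * (r.factorial * r ^ (n - r)) ≤
      ∑ c : V → Fin r, (E.filter fun F => F.image c = Finset.univ).card := by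
    have : ∀ c : V → Fin r, (E.filter fun F => F.image c = Finset.univ).card
        = ∑ F ∈ E, if F.image c = Finset.univ then 1 else 0 := by
      intro c; rw [Finset.card_filter]
    calc E.card * (r.factorial * r ^ (n - r))
        = ∑ F ∈ E, (r.factorial * r ^ (n - r)) := by rw [Finset.sum_const, smul_eq_mul]
      _ ≤ ∑ F ∈ E, (Finset.univ.filter fun c : V → Fin r => F.image c = Finset.univ).card := by
          apply Finset.sum_le_sum; intro F hF; exact rainbow_count r F (hunif F hF)
      _ = ∑ F ∈ E, ∑ c : V → Fin r, (if F.image c = Finset.univ then 1 else 0) := by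
          apply Finset.sum_congr rfl; intro F _; rw [Finset.card_filter]
      _ = ∑ c : V → Fin r, ∑ F ∈ E, (if F.image c = Finset.univ then 1 else 0) :=
          Finset.sum_comm
      _ = ∑ c : V → Fin r, (E.filter fun F => F.image c = Finset.univ).card := by
          apply Finset.sum_congr rfl; intro c _; rw [← this c]
  -- pick the best colouring
  have hfuncs : Fintype.card (V → Fin r) = r ^ n := by
    rw [Fintype.card_fun, Fintype.card_fin]
  haveI : Nonempty (V → Fin r) := ⟨fun _ => ⟨0, hr⟩⟩
  have hex := Finset.exists_le_of_sum_le
    (s := (Finset.univ : Finset (V → Fin r)))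
    (f := fun _ => E.card * (r.factorial * r ^ (n - r)))
    (g := fun c => r ^ n * (E.filter fun F => F.image c = Finset.univ).card)
    (Finset.univ_nonempty)
    (by
      rw [Finset.sum_const, ← Finset.mul_sum, Finset.card_univ, hfuncs, smul_eq_mul]
      exact Nat.mul_le_mul_left _ hsum)
  obtain ⟨c, -, hc⟩ := hex
  refine ⟨c, ?_⟩
  set X := (E.filter fun F => F.image c = Finset.univ).card with hX
  -- from E.card * (r! * r^(n-r)) ≤ r^n * X deduce E.card ≤ 4^r * X
  have hrw : r ^ n = r ^ (n - r) * r ^ r := by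
    rw [← pow_add]; congr 1; omega
  have h1 : E.card * r.factorial * r ^ (n-r) ≤ (r ^ r * X) * r ^ (n-r) := by
    calc E.card * r.factorial * r ^ (n-r) = E.card * (r.factorial * r ^ (n - r)) := by ring
      _ ≤ r ^ n * X := hc
      _ = (r ^ r * X) * r ^ (n-r) := by rw [hrw]; ring
  have h2 : E.card * r.factorial ≤ r ^ r * X :=
    Nat.le_of_mul_le_mul_right h1 (Nat.pow_pos hr)
  have h3 : E.card * r.factorial ≤ (r.factorial * 4^r) * X :=
    le_trans h2 (Nat.mul_le_mul_right _ (pow_self_le_factorial_mul r))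
  have h4 : E.card * r.factorial ≤ (4^r * X) * r.factorial := by
    calc E.card * r.factorial ≤ (r.factorial * 4^r) * X := h3
      _ = (4^r * X) * r.factorial := by ring
  exact Nat.le_of_mul_le_mul_right h4 (Nat.factorial_pos r)


variable {V : Type} [Fintype V] [DecidableEq V] {r : ℕ}

def absentP (c : V → Fin r) (G : Finset (Finset V)) (e : Finset (Fin r)) : Prop :=
  ∀ F ∈ G, ∀ F' ∈ G, F ≠ F' → ¬ e ⊆ (F ∩ F').image c

noncomputable def degE (c : V → Fin r) (G : Finset (Finset V)) (e : Finset (Fin r))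
    (F : Finset V) : ℕ :=
  (G.filter fun F' => e ⊆ (F ∩ F').image c).card

def alldoneP (s t : ℕ) (c : V → Fin r) (G : Finset (Finset V)) : Prop :=
  ∀ e : Finset (Fin r), e.card ≤ s → absentP c G e ∨ ∀ F ∈ G, t ≤ degE c G e F

noncomputable def pres (s : ℕ) (c : V → Fin r) (G : Finset (Finset V)) :
    Finset (Finset (Fin r)) :=
  Finset.univ.filter fun e => e.card ≤ s ∧ ¬ absentP c G e

lemma absent_mono {c : V → Fin r} {G G' : Finset (Finset V)} {e : Finset (Fin r)}
    (h : G' ⊆ G) (ha : absentP c G e) : absentP c G' e :=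
  fun F hF F' hF' hne => ha F (h hF) F' (h hF') hne

lemma pres_mono {s : ℕ} {c : V → Fin r} {G G' : Finset (Finset V)} (h : G' ⊆ G) :
    pres s c G' ⊆ pres s c G := by
  intro e he
  rw [pres, Finset.mem_filter] at he ⊢
  exact ⟨he.1, he.2.1, fun ha => he.2.2 (absent_mono h ha)⟩

lemma processAux (s t : ℕ) (c : V → Fin r) :
    ∀ n (G : Finset (Finset V)), G.card ≤ n → (∀ F ∈ G, F.image c = Finset.univ) →
    ∃ (Gs : Finset (Finset V)) (S : Finset (Finset (Fin r)))
      (I : Finset (Fin r) → Finset (Finset V)),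
      Gs ⊆ G ∧ alldoneP s t c Gs ∧ S ⊆ pres s c G ∧
      (∀ e ∈ S, I e ⊆ G ∧ absentP c (I e) e) ∧
      G.card ≤ Gs.card + t * ∑ e ∈ S, (I e).card := by
  intro n
  induction n with
  | zero =>
    intro G hG _
    have : G = ∅ := Finset.card_eq_zero.mp (Nat.le_zero.mp hG)
    subst this
    exact ⟨∅, ∅, fun _ => ∅, Finset.Subset.refl _,
      fun e _ => Or.inl (fun F hF => absurd hF (Finset.notMem_empty F)),
      Finset.empty_subset _, fun e he => absurd he (Finset.notMem_empty e), by simp⟩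
  | succ n ih =>
    intro G hG hrb
    by_cases hdone : alldoneP s t c G
    · exact ⟨G, ∅, fun _ => ∅, Finset.Subset.refl _, hdone, Finset.empty_subset _,
        fun e he => absurd he (Finset.notMem_empty e), by simp⟩
    · rw [alldoneP] at hdone
      push_neg at hdone
      obtain ⟨e, hes, hnab, F, hFG, hdeg⟩ := hdone
      set N := G.filter (fun F' => e ⊆ (F ∩ F').image c) with hN
      have hFN : F ∈ N := by
        rw [hN, Finset.mem_filter]
        refine ⟨hFG, ?_⟩
        rw [Finset.inter_self, hrb F hFG]
        exact Finset.subset_univ _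
      have hNG : N ⊆ G := Finset.filter_subset _ _
      set G' := G \ N with hG'
      have hG'G : G' ⊆ G := Finset.sdiff_subset
      have hFnG' : F ∉ G' := by
        rw [hG', Finset.mem_sdiff]
        tauto
      have hcard' : G'.card ≤ n := by
        have hlt : G'.card < G.card := Finset.card_lt_card ⟨hG'G, fun hsub => hFnG' (hsub hFG)⟩
        omega
      obtain ⟨Gs, S', I', hGsub, hGdone, hSsub, hSI, hScard⟩ :=
        ih G' hcard' (fun F' hF' => hrb F' (hG'G hF'))
      -- new independent set for e
      set Ie : Finset (Finset V) := insert F (if e ∈ S' then I' e else ∅) with hIe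
      set I : Finset (Fin r) → Finset (Finset V) := fun e' => if e' = e then Ie else I' e' with hI
      set S : Finset (Finset (Fin r)) := insert e S' with hS
      have hIeq : I e = Ie := by simp [hI]
      have hIne : ∀ e', e' ≠ e → I e' = I' e' := by intro e' h; simp [hI, h]
      have hIeold : (if e ∈ S' then I' e else ∅) ⊆ G' := by
        split
        · exact (hSI e (by assumption)).1
        · exact Finset.empty_subset _
      have hIeoldAb : absentP c (if e ∈ S' then I' e else ∅) e := by
        split
        · exact (hSI e (by assumption)).2
        · intro A hA; exact absurd hA (Finset.notMem_empty _)
      have hIeG : Ie ⊆ G := by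
        rw [hIe]
        intro A hA
        rcases Finset.mem_insert.mp hA with h | h
        · subst h; exact hFG
        · exact hG'G (hIeold h)
      have hIeAb : absentP c Ie e := by
        intro A hA B hB hAB hcont
        rw [hIe] at hA hB
        rcases Finset.mem_insert.mp hA with hA1 | hA1 <;>
          rcases Finset.mem_insert.mp hB with hB1 | hB1
        · exact hAB (hA1.trans hB1.symm)
        · subst hA1
          have hBG' : B ∈ G' := hIeold hB1
          have : B ∉ N := by rw [hG', Finset.mem_sdiff] at hBG'; exact hBG'.2
          exact this (by rw [hN, Finset.mem_filter]; exact ⟨hG'G hBG', hcont⟩)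
        · subst hB1
          have hAG' : A ∈ G' := hIeold hA1
          have : A ∉ N := by rw [hG', Finset.mem_sdiff] at hAG'; exact hAG'.2
          refine this ?_
          rw [hN, Finset.mem_filter]
          refine ⟨hG'G hAG', ?_⟩
          rwa [Finset.inter_comm]
        · exact hIeoldAb A hA1 B hB1 hAB hcont
      have hFnotold : F ∉ (if e ∈ S' then I' e else ∅) := fun h => hFnG' (hIeold h)
      have hIecard : Ie.card = (if e ∈ S' then I' e else ∅).card + 1 := by
        rw [hIe, Finset.card_insert_of_notMem hFnotold]
      -- sum bound
      have hsum : ∑ e' ∈ S', (I' e').card + 1 ≤ ∑ e' ∈ S, (I e').card := by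
        by_cases heS' : e ∈ S'
        · have hSeq : S = S' := by rw [hS, Finset.insert_eq_self.mpr heS']
          rw [hSeq]
          have h1 : ∑ e' ∈ S'.erase e, (I e').card = ∑ e' ∈ S'.erase e, (I' e').card :=
            Finset.sum_congr rfl (fun e' he' => by rw [hIne e' (Finset.ne_of_mem_erase he')])
          have h2 := Finset.sum_erase_add S' (fun e' => (I e').card) heS'
          have h3 := Finset.sum_erase_add S' (fun e' => (I' e').card) heS'
          have h4 : (I e).card = (I' e).card + 1 := by
            rw [hIeq, hIecard, if_pos heS']
          omega
        · rw [hS, Finset.sum_insert heS']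
          have h1 : (I e).card = 1 := by
            rw [hIeq, hIecard, if_neg heS', Finset.card_empty]
          have h2 : ∑ e' ∈ S', (I e').card = ∑ e' ∈ S', (I' e').card :=
            Finset.sum_congr rfl (fun e' he' => by
              rw [hIne e' (fun h => heS' (h ▸ he'))])
          omega
      refine ⟨Gs, S, I, hGsub.trans hG'G, hGdone, ?_, ?_, ?_⟩
      · rw [hS]
        intro e' he'
        rcases Finset.mem_insert.mp he' with h | h
        · subst h
          rw [pres, Finset.mem_filter]
          exact ⟨Finset.mem_univ _, hes, hnab⟩
        · exact pres_mono hG'G (hSsub h)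
      · intro e' he'
        by_cases h : e' = e
        · subst h; rw [hIeq]; exact ⟨hIeG, hIeAb⟩
        · rw [hIne e' h]
          have he'S' : e' ∈ S' := by
            rw [hS] at he'
            rcases Finset.mem_insert.mp he' with h1 | h1
            · exact absurd h1 h
            · exact h1
          exact ⟨(hSI e' he'S').1.trans hG'G, (hSI e' he'S').2⟩
      · have hGsplit : G.card = G'.card + N.card := by
          rw [hG', Finset.card_sdiff_of_subset hNG]
          have := Finset.card_le_card hNG
          omega
        have hNt : N.card ≤ t := by
          rw [degE] at hdeg
          rw [hN]
          omega
        calc G.card = G'.card + N.card := hGsplit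
          _ ≤ (Gs.card + t * ∑ e' ∈ S', (I' e').card) + t := by
              exact Nat.add_le_add hScard hNt
          _ = Gs.card + t * (∑ e' ∈ S', (I' e').card + 1) := by ring
          _ ≤ Gs.card + t * ∑ e' ∈ S, (I e').card := by
              exact Nat.add_le_add_left (Nat.mul_le_mul_left _ hsum) _

lemma presCard_le (s : ℕ) (c : V → Fin r) (G : Finset (Finset V)) :
    (pres s c G).card ≤ ∑ k ∈ Finset.range (s+1), r.choose k := by
  have hsub : pres s c G ⊆ (Finset.range (s+1)).biUnion
      (fun k => Finset.powersetCard k (Finset.univ : Finset (Fin r))) := by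
    intro e he
    rw [pres, Finset.mem_filter] at he
    rw [Finset.mem_biUnion]
    exact ⟨e.card, Finset.mem_range.mpr (Nat.lt_succ_of_le he.2.1),
      Finset.mem_powersetCard.mpr ⟨Finset.subset_univ _, rfl⟩⟩
  calc (pres s c G).card ≤ _ := Finset.card_le_card hsub
    _ ≤ ∑ k ∈ Finset.range (s+1), (Finset.powersetCard k (Finset.univ : Finset (Fin r))).card :=
        Finset.card_biUnion_le
    _ = ∑ k ∈ Finset.range (s+1), r.choose k := by
        apply Finset.sum_congr rfl
        intro k _
        rw [Finset.card_powersetCard, Finset.card_univ, Fintype.card_fin]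

lemma cleanLemma (s t : ℕ) (ht : 0 < t) (T : ℕ) (hT1 : 1 ≤ T)
    (hTs : ∑ k ∈ Finset.range (s+1), r.choose k ≤ T) (c : V → Fin r) :
    ∀ k (G : Finset (Finset V)), (pres s c G).card ≤ k →
      (∀ F ∈ G, F.image c = Finset.univ) →
      ∃ G', G' ⊆ G ∧ alldoneP s t c G' ∧ G.card ≤ (2*t*T)^(k+1) * G'.card := by
  have hC : 2 ≤ 2*t*T := by nlinarith
  intro k
  induction k with
  | zero =>
    intro G hG _
    refine ⟨G, Finset.Subset.refl _, ?_, ?_⟩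
    · intro e he
      by_cases hab : absentP c G e
      · exact Or.inl hab
      · exfalso
        have : e ∈ pres s c G := by
          rw [pres, Finset.mem_filter]; exact ⟨Finset.mem_univ _, he, hab⟩
        have := Finset.card_pos.mpr ⟨e, this⟩
        omega
    · have h1 : 0 < (2*t*T)^(0+1) := Nat.pow_pos (by omega)
      calc G.card = 1 * G.card := (one_mul _).symm
        _ ≤ (2*t*T)^(0+1) * G.card := Nat.mul_le_mul_right _ h1
  | succ k ih =>
    intro G hG hrb
    obtain ⟨Gs, S, I, hGsub, hGdone, hSsub, hSI, hScard⟩ :=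
      processAux s t c G.card G (le_refl _) hrb
    by_cases hbig : G.card ≤ 2 * Gs.card
    · refine ⟨Gs, hGsub, hGdone, ?_⟩
      have h2 : 2 ≤ (2*t*T)^(k+1+1) := le_trans hC (Nat.le_self_pow (by omega) _)
      calc G.card ≤ 2 * Gs.card := hbig
        _ ≤ (2*t*T)^(k+1+1) * Gs.card := Nat.mul_le_mul_right _ h2
    · push_neg at hbig
      -- G.card ≥ 1 and t * Σ ≥ G.card / 2
      have hsum2 : G.card < 2 * (t * ∑ e ∈ S, (I e).card) := by omega
      have hSne : S.Nonempty := by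
        rcases S.eq_empty_or_nonempty with h | h
        · exfalso; rw [h] at hsum2; simp at hsum2
        · exact h
      obtain ⟨e₀, he₀S, he₀max⟩ := Finset.exists_max_image S (fun e => (I e).card) hSne
      have hScardT : S.card ≤ T := by
        calc S.card ≤ (pres s c G).card := Finset.card_le_card hSsub
          _ ≤ _ := presCard_le s c G
          _ ≤ T := hTs
      have hsum3 : ∑ e ∈ S, (I e).card ≤ T * (I e₀).card := by
        calc ∑ e ∈ S, (I e).card ≤ ∑ _e ∈ S, (I e₀).card :=
              Finset.sum_le_sum (fun e he => he₀max e he)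
          _ = S.card * (I e₀).card := by rw [Finset.sum_const, smul_eq_mul]
          _ ≤ T * (I e₀).card := Nat.mul_le_mul_right _ hScardT
      have hGI : G.card ≤ (2*t*T) * (I e₀).card := by
        calc G.card ≤ 2 * (t * ∑ e ∈ S, (I e).card) := le_of_lt hsum2
          _ ≤ 2 * (t * (T * (I e₀).card)) := by
              exact Nat.mul_le_mul_left _ (Nat.mul_le_mul_left _ hsum3)
          _ = (2*t*T) * (I e₀).card := by ring
      obtain ⟨hIG, hIab⟩ := hSI e₀ he₀S
      -- pres of I e₀ is smaller
      have he₀pres : e₀ ∈ pres s c G := hSsub he₀S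
      have he₀notpres : e₀ ∉ pres s c (I e₀) := by
        rw [pres, Finset.mem_filter]
        rintro ⟨-, -, hab⟩
        exact hab hIab
      have hpresI : (pres s c (I e₀)).card ≤ k := by
        have hsub2 : pres s c (I e₀) ⊆ (pres s c G).erase e₀ := by
          intro e he
          rw [Finset.mem_erase]
          exact ⟨fun h => he₀notpres (h ▸ he), pres_mono hIG he⟩
        calc (pres s c (I e₀)).card ≤ ((pres s c G).erase e₀).card := Finset.card_le_card hsub2
          _ = (pres s c G).card - 1 := Finset.card_erase_of_mem he₀pres
          _ ≤ k := by omega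
      obtain ⟨G', hG'sub, hG'done, hG'card⟩ := ih (I e₀) hpresI
        (fun F hF => hrb F (hIG hF))
      refine ⟨G', hG'sub.trans hIG, hG'done, ?_⟩
      calc G.card ≤ (2*t*T) * (I e₀).card := hGI
        _ ≤ (2*t*T) * ((2*t*T)^(k+1) * G'.card) := Nat.mul_le_mul_left _ hG'card
        _ = (2*t*T)^(k+1+1) * G'.card := by ring

end FKaux

/-- Theorem 3.6 (variant of a theorem of Füredi): every `r`-uniform hypergraph has a large
`r`-partite subfamily `E*` in which the colour sets of pairwise intersections of edges are
governed by an `s`-bounded "kernel" hypergraph `H` on the colours. -/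
theorem furedi_kernel (s r t : ℕ) (hs : 0 < s) (hr : 0 < r) (ht : 0 < t)
    (V : Type) [Fintype V] [DecidableEq V] (E : Finset (Finset V))
    (hunif : ∀ F ∈ E, F.card = r) :
    ∃ (Estar : Finset (Finset V)) (c : V → Fin r),
      Estar ⊆ E ∧
      ((t * r * 2 ^ (2*r+1) : ℕ) : ℝ) ^
          (-((∑ k ∈ Finset.range (s+1), r.choose k : ℕ) : ℤ) - 1) * (E.card : ℝ)
        ≤ (Estar.card : ℝ) ∧
      (∀ F ∈ Estar, F.image c = Finset.univ) ∧
      ∃ H : Finset (Finset (Fin r)),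
        (∀ e ∈ H, e.card ≤ s) ∧
        ∀ e : Finset (Fin r), e.card ≤ s →
          (e ∈ H → ∀ F ∈ Estar, ∃ D : Finset (Finset V), D ⊆ Estar ∧ D.card = t ∧
              ∀ F' ∈ D, e ⊆ (F ∩ F').image c) ∧
          (e ∉ H → ∀ F ∈ Estar, ∀ F' ∈ Estar, F ≠ F' → ¬ e ⊆ (F ∩ F').image c) := by
  classical
  set T : ℕ := ∑ k ∈ Finset.range (s+1), r.choose k with hT
  set M : ℕ := t * r * 2 ^ (2*r+1) with hM
  have hT1 : 1 ≤ T := fk_one_le_sum_choose r s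
  have hT2 : T ≤ 2^r := fk_sum_choose_le r s
  have hMpos : 0 < M := by
    rw [hM]; positivity
  -- reduce the real inequality to a nat inequality
  have hreduce : ∀ Estar : Finset (Finset V), E.card ≤ M^(T+1) * Estar.card →
      ((t * r * 2 ^ (2*r+1) : ℕ) : ℝ) ^ (-((T : ℕ) : ℤ) - 1) * (E.card : ℝ)
        ≤ (Estar.card : ℝ) := by
    intro Estar hnat
    have hexp : (-((T : ℕ) : ℤ) - 1) = -(((T+1 : ℕ) : ℤ)) := by push_cast; ring
    rw [← hM, hexp, zpow_neg, zpow_natCast]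
    rw [inv_mul_le_iff₀ (by positivity)]
    exact_mod_cast hnat
  rcases E.eq_empty_or_nonempty with hE | hE
  · subst hE
    refine ⟨∅, fun _ => ⟨0, hr⟩, Finset.empty_subset _, ?_, ?_, ∅, ?_, ?_⟩
    · apply hreduce; simp
    · intro F hF; exact absurd hF (Finset.notMem_empty F)
    · intro e he; exact absurd he (Finset.notMem_empty e)
    · intro e he
      refine ⟨fun h => absurd h (Finset.notMem_empty e), ?_⟩
      intro _ F hF; exact absurd hF (Finset.notMem_empty F)
  · obtain ⟨c, hc⟩ := exists_good_colouring r hr E hunif hE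
    set R := E.filter (fun F => F.image c = Finset.univ) with hR
    have hRrb : ∀ F ∈ R, F.image c = Finset.univ := by
      intro F hF; exact (Finset.mem_filter.mp hF).2
    have hpresR : (pres s c R).card ≤ T := le_trans (presCard_le s c R) (le_of_eq hT.symm)
    obtain ⟨Estar, hEsub, hEdone, hEcard⟩ :=
      cleanLemma s t ht T hT1 (le_of_eq hT) c T R hpresR hRrb
    refine ⟨Estar, c, hEsub.trans (Finset.filter_subset _ _), ?_, ?_, ?_⟩
    · apply hreduce
      calc E.card ≤ 4^r * R.card := hc
        _ ≤ 4^r * ((2*t*T)^(T+1) * Estar.card) := Nat.mul_le_mul_left _ hEcard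
        _ = (4^r * (2*t*T)^(T+1)) * Estar.card := by ring
        _ ≤ M^(T+1) * Estar.card :=
            Nat.mul_le_mul_right _ (fk_arith r t T hr ht hT1 hT2)
    · intro F hF; exact hRrb F (hEsub hF)
    · refine ⟨pres s c Estar, ?_, ?_⟩
      · intro e he
        exact ((Finset.mem_filter.mp he).2).1
      · intro e hes
        constructor
        · intro heH F hF
          have hnab : ¬ absentP c Estar e := ((Finset.mem_filter.mp heH).2).2
          have hrob : ∀ F' ∈ Estar, t ≤ degE c Estar e F' :=
            (hEdone e hes).resolve_left hnab
          have hdeg := hrob F hF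
          rw [degE] at hdeg
          obtain ⟨D, hDsub, hDcard⟩ := Finset.exists_subset_card_eq hdeg
          refine ⟨D, hDsub.trans (Finset.filter_subset _ _), hDcard, ?_⟩
          intro F' hF'
          exact (Finset.mem_filter.mp (hDsub hF')).2
        · intro heH
          have hab : absentP c Estar e := by
            by_contra hnab
            exact heH (Finset.mem_filter.mpr ⟨Finset.mem_univ _, hes, hnab⟩)
          exact hab
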